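/- Let n ≥ 1, let T₀ > 0, let (a_{αβ})_{α,β=1}^n be a symmetric matrix of real numbers, and let (x_α, u_α, T_α) be a differentiable solution of the PB-CS model with T_α(t) > 0 for all α and t. Then the total entropy S(t) := ∑_{α=1}^n ln T_α(t) satisfies, for all t, (d/dt) S(t) = (T₀/(2n)) ∑_{α,β=1}^n a_{αβ} [ ‖u_β/T_β − u_α/T_α‖² + T₀ (1/T_α − 1/T_β)² ]. In particular S is nondecreasing when all a_{αβ} ≥ 0. -/

import Mathlib

open Finset RealInnerProductSpace

private lemma symm_pair_sum {n : ℕ} (a : Fin n → Fin n → ℝ) (ha : ∀ α β, a α β = a β α)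
    (f : Fin n → Fin n → ℝ) :
    (2:ℝ) * (∑ α, ∑ β, a α β * f α β) = ∑ α, ∑ β, a α β * (f α β + f β α) := by
  have h : ∑ α, ∑ β, a α β * f β α = ∑ α, ∑ β, a α β * f α β := by
    rw [Finset.sum_comm]
    exact Finset.sum_congr rfl fun α _ => Finset.sum_congr rfl fun β _ => by rw [ha]
  simp_rw [mul_add, Finset.sum_add_distrib, h]
  ring

private lemma inner_pair {d : ℕ} (w z : EuclideanSpace ℝ (Fin d)) :
    ⟪w - z, z⟫ + ⟪z - w, w⟫ = -‖w - z‖ ^ 2 := by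
  rw [← real_inner_self_eq_norm_sq]
  simp only [inner_sub_left, inner_sub_right]
  rw [real_inner_comm z w]
  ring

theorem stmt11 (n d : ℕ) (hn : 1 ≤ n) (T₀ : ℝ) (hT₀ : 0 < T₀)
    (a : Fin n → Fin n → ℝ) (ha_symm : ∀ α β, a α β = a β α)
    (x u : Fin n → ℝ → EuclideanSpace ℝ (Fin d)) (T : Fin n → ℝ → ℝ)
    (hTpos : ∀ α t, 0 < T α t)
    (hx : ∀ α t, HasDerivAt (x α) (u α t) t)
    (hu : ∀ α t, HasDerivAt (u α)
      ((T₀ / (n : ℝ)) • ∑ β, a α β • ((T β t)⁻¹ • u β t - (T α t)⁻¹ • u α t)) t)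
    (hT : ∀ α t, HasDerivAt (fun s => T α s + ‖u α s‖ ^ 2 / 2)
      ((T₀ ^ 2 / (n : ℝ)) * ∑ β, a α β * ((T α t)⁻¹ - (T β t)⁻¹)) t) :
    (∀ t, HasDerivAt (fun s => ∑ α, Real.log (T α s))
      ((T₀ / (2 * n) : ℝ) * ∑ α, ∑ β, a α β *
        (‖(T β t)⁻¹ • u β t - (T α t)⁻¹ • u α t‖ ^ 2 +
          T₀ * ((T α t)⁻¹ - (T β t)⁻¹) ^ 2)) t) ∧
    ((∀ α β, 0 ≤ a α β) → Monotone (fun t => ∑ α, Real.log (T α t))) := by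
  have key : ∀ t, HasDerivAt (fun s => ∑ α, Real.log (T α s))
      ((T₀ / (2 * n) : ℝ) * ∑ α, ∑ β, a α β *
        (‖(T β t)⁻¹ • u β t - (T α t)⁻¹ • u α t‖ ^ 2 +
          T₀ * ((T α t)⁻¹ - (T β t)⁻¹) ^ 2)) t := by
    intro t
    -- derivative of kinetic part
    have hhalf : ∀ α, HasDerivAt (fun s => ‖u α s‖ ^ 2 / 2)
        (⟪((T₀ / (n : ℝ)) • ∑ β, a α β • ((T β t)⁻¹ • u β t - (T α t)⁻¹ • u α t)),
          u α t⟫) t := by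
      intro α
      have h := ((hu α t).inner ℝ (hu α t)).div_const 2
      have heq : (fun s => ‖u α s‖ ^ 2 / 2) = fun s => ⟪u α s, u α s⟫ / 2 := by
        funext s; rw [real_inner_self_eq_norm_sq]
      rw [heq]
      refine h.congr_deriv (Eq.symm ?_)
      rw [real_inner_comm]
      ring
    -- derivative of temperature
    have hT' : ∀ α, HasDerivAt (T α)
        ((T₀ ^ 2 / (n : ℝ)) * (∑ β, a α β * ((T α t)⁻¹ - (T β t)⁻¹))
          - ⟪((T₀ / (n : ℝ)) • ∑ β, a α β • ((T β t)⁻¹ • u β t - (T α t)⁻¹ • u α t)),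
            u α t⟫) t := by
      intro α
      have h := (hT α t).fun_sub (hhalf α)
      simp only [add_sub_cancel_right] at h
      exact h
    have hS := HasDerivAt.fun_sum (u := Finset.univ)
      (fun α _ => ((hT' α).log (hTpos α t).ne'))
    refine hS.congr_deriv (Eq.symm ?_)
    -- now the algebra
    have step : ∀ α : Fin n,
        ((T₀ ^ 2 / (n : ℝ)) * (∑ β, a α β * ((T α t)⁻¹ - (T β t)⁻¹))
          - ⟪((T₀ / (n : ℝ)) • ∑ β, a α β • ((T β t)⁻¹ • u β t - (T α t)⁻¹ • u α t)),
            u α t⟫) / T α t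
        = (T₀ ^ 2 / (n : ℝ)) *
            (∑ β, a α β * ((T α t)⁻¹ * ((T α t)⁻¹ - (T β t)⁻¹)))
          - (T₀ / (n : ℝ)) *
            (∑ β, a α β * ((T α t)⁻¹ *
              ⟪(T β t)⁻¹ • u β t - (T α t)⁻¹ • u α t, u α t⟫)) := by
      intro α
      simp only [real_inner_smul_left, sum_inner, Finset.mul_sum]
      rw [sub_div, Finset.sum_div, Finset.sum_div, ← Finset.sum_sub_distrib,
        ← Finset.sum_sub_distrib]
      refine Finset.sum_congr rfl fun β _ => ?_
      ring
    have hrw : ∑ α, (((T₀ ^ 2 / (n : ℝ)) * (∑ β, a α β * ((T α t)⁻¹ - (T β t)⁻¹))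
          - ⟪((T₀ / (n : ℝ)) • ∑ β, a α β • ((T β t)⁻¹ • u β t - (T α t)⁻¹ • u α t)),
            u α t⟫) / T α t)
        = (T₀ ^ 2 / (n : ℝ)) * (∑ α, ∑ β, a α β * ((T α t)⁻¹ * ((T α t)⁻¹ - (T β t)⁻¹)))
          - (T₀ / (n : ℝ)) * (∑ α, ∑ β, a α β * ((T α t)⁻¹ *
              ⟪(T β t)⁻¹ • u β t - (T α t)⁻¹ • u α t, u α t⟫)) := by
      rw [Finset.sum_congr rfl fun α _ => step α, Finset.sum_sub_distrib,
        ← Finset.mul_sum, ← Finset.mul_sum]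
    rw [hrw]
    have e1 : (2:ℝ) * (∑ α, ∑ β, a α β * ((T α t)⁻¹ * ((T α t)⁻¹ - (T β t)⁻¹)))
        = ∑ α, ∑ β, a α β * ((T α t)⁻¹ - (T β t)⁻¹) ^ 2 := by
      rw [symm_pair_sum a ha_symm]
      exact Finset.sum_congr rfl fun α _ => Finset.sum_congr rfl fun β _ => by ring
    have e2 : (2:ℝ) * (∑ α, ∑ β, a α β * ((T α t)⁻¹ *
          ⟪(T β t)⁻¹ • u β t - (T α t)⁻¹ • u α t, u α t⟫))
        = -∑ α, ∑ β, a α β * ‖(T β t)⁻¹ • u β t - (T α t)⁻¹ • u α t‖ ^ 2 := by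
      rw [symm_pair_sum a ha_symm, ← Finset.sum_neg_distrib]
      refine Finset.sum_congr rfl fun α _ => ?_
      rw [← Finset.sum_neg_distrib]
      refine Finset.sum_congr rfl fun β _ => ?_
      rw [← real_inner_smul_right, ← real_inner_smul_right,
        inner_pair ((T β t)⁻¹ • u β t) ((T α t)⁻¹ • u α t)]
      ring
    have e3 : (∑ α, ∑ β, a α β *
          (‖(T β t)⁻¹ • u β t - (T α t)⁻¹ • u α t‖ ^ 2 +
            T₀ * ((T α t)⁻¹ - (T β t)⁻¹) ^ 2))
        = (∑ α, ∑ β, a α β * ‖(T β t)⁻¹ • u β t - (T α t)⁻¹ • u α t‖ ^ 2)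
          + T₀ * (∑ α, ∑ β, a α β * ((T α t)⁻¹ - (T β t)⁻¹) ^ 2) := by
      simp_rw [mul_add, Finset.sum_add_distrib, Finset.mul_sum]
      congr 1
      exact Finset.sum_congr rfl fun α _ => Finset.sum_congr rfl fun β _ => by ring
    linear_combination (T₀ / (2 * (n:ℝ))) * e3 - (T₀ ^ 2 / (2 * (n:ℝ))) * e1
      + (T₀ / (2 * (n:ℝ))) * e2
  refine ⟨key, fun hpos => ?_⟩
  have hdiff : Differentiable ℝ (fun t => ∑ α, Real.log (T α t)) :=
    fun t => (key t).differentiableAt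
  refine monotone_of_deriv_nonneg hdiff fun t => ?_
  rw [(key t).deriv]
  have hn2 : (0:ℝ) < 2 * n := by
    have : (1:ℝ) ≤ (n:ℝ) := by exact_mod_cast hn
    linarith
  refine mul_nonneg (by positivity) ?_
  refine Finset.sum_nonneg fun α _ => Finset.sum_nonneg fun β _ => ?_
  exact mul_nonneg (hpos α β) (by positivity)
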